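/- Let Λ be a hereditary artin algebra, T a Λ-module, and M an indecomposable Λ-module with Ext^1(T,M) = 0. Then the minimal left add(T)-approximation λ_M: M → _M T is either a monomorphism or an epimorphism. -/

import Mathlib

/-- `X` is (isomorphic to) a direct summand of `M`. -/
def IsSummand (Λ : Type) [Ring Λ] (X M : Type) [AddCommGroup X] [Module Λ X]
    [AddCommGroup M] [Module Λ M] : Prop :=
  ∃ (i : X →ₗ[Λ] M) (p : M →ₗ[Λ] X), p ∘ₗ i = LinearMap.id

/-- `X` belongs to `add T`, the additive subcategory generated by the
indecomposable direct summands of `T`. -/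
def InAdd (Λ : Type) [Ring Λ] (T X : Type) [AddCommGroup T] [Module Λ T]
    [AddCommGroup X] [Module Λ X] : Prop :=
  ∃ n : ℕ, IsSummand Λ X (Fin n → T)

/-- `Ext¹_Λ(A, B) = 0`: every short exact sequence `0 → B → E → A → 0` splits. -/
def Ext1Zero (Λ : Type) [Ring Λ] (A B : Type) [AddCommGroup A] [Module Λ A]
    [AddCommGroup B] [Module Λ B] : Prop :=
  ∀ (E : Type) [AddCommGroup E] [Module Λ E] (i : B →ₗ[Λ] E) (p : E →ₗ[Λ] A),
    Function.Injective i → Function.Surjective p → LinearMap.ker p = LinearMap.range i →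
    ∃ r : E →ₗ[Λ] B, r ∘ₗ i = LinearMap.id

/-- An indecomposable module: nonzero, and admitting no nontrivial direct sum
decomposition. -/
def IsIndec (Λ : Type) [Ring Λ] (M : Type) [AddCommGroup M] [Module Λ M] : Prop :=
  (∃ m : M, m ≠ 0) ∧ ∀ N N' : Submodule Λ M, IsCompl N N' → N = ⊥ ∨ N' = ⊥

/-- A hereditary ring: submodules of projective modules are projective. -/
def IsHereditaryRing (Λ : Type) [Ring Λ] : Prop :=
  ∀ (M : Type) [AddCommGroup M] [Module Λ M], Module.Projective Λ M →
    ∀ N : Submodule Λ M, Module.Projective Λ N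


open Function LinearMap

variable {Λ : Type} [Ring Λ]

/-- Factor a linear map through a surjection whose kernel it kills. -/
lemma factor_through_surj {E A B : Type*} [AddCommGroup E] [Module Λ E]
    [AddCommGroup A] [Module Λ A] [AddCommGroup B] [Module Λ B]
    (p : E →ₗ[Λ] A) (hp : Function.Surjective p) (g : E →ₗ[Λ] B)
    (hker : LinearMap.ker p ≤ LinearMap.ker g) : ∃ h : A →ₗ[Λ] B, h ∘ₗ p = g := by
  let e := LinearMap.quotKerEquivOfSurjective p hp
  refine ⟨(LinearMap.ker p).liftQ g hker ∘ₗ e.symm.toLinearMap, ?_⟩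
  ext x
  have h1 : e.symm (p x) = Submodule.Quotient.mk x := by
    rw [LinearEquiv.symm_apply_eq]
    rfl
  simp only [LinearMap.comp_apply, LinearEquiv.coe_coe, h1]
  exact Submodule.liftQ_apply _ _ _

lemma section_of_retraction {M E A : Type*} [AddCommGroup M] [Module Λ M]
    [AddCommGroup E] [Module Λ E] [AddCommGroup A] [Module Λ A]
    (i : M →ₗ[Λ] E) (p : E →ₗ[Λ] A) (hp : Function.Surjective p)
    (hker : LinearMap.ker p = LinearMap.range i)
    (r : E →ₗ[Λ] M) (hr : r ∘ₗ i = LinearMap.id) :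
    ∃ s : A →ₗ[Λ] E, p ∘ₗ s = LinearMap.id := by
  have hk : LinearMap.ker p ≤ LinearMap.ker (LinearMap.id - i ∘ₗ r) := by
    intro x hx
    rw [hker] at hx
    obtain ⟨m, rfl⟩ := hx
    have : r (i m) = m := by
      have := congrFun (congrArg (fun (F : M →ₗ[Λ] M) => (F : M → M)) hr) m
      simpa using this
    simp [this]
  obtain ⟨s, hs⟩ := factor_through_surj p hp (LinearMap.id - i ∘ₗ r) hk
  refine ⟨s, ?_⟩
  ext a
  obtain ⟨x, rfl⟩ := hp a
  have h2 : s (p x) = x - i (r x) := by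
    have := congrFun (congrArg (fun (F : E →ₗ[Λ] E) => (F : E → E)) hs) x
    simpa using this
  have h3 : p (i (r x)) = 0 := by
    have : i (r x) ∈ LinearMap.ker p := by
      rw [hker]; exact ⟨r x, rfl⟩
    simpa using this
  simp [h2, map_sub, h3]

lemma retraction_of_section {M E A : Type*} [AddCommGroup M] [Module Λ M]
    [AddCommGroup E] [Module Λ E] [AddCommGroup A] [Module Λ A]
    (i : M →ₗ[Λ] E) (p : E →ₗ[Λ] A) (hi : Function.Injective i)
    (hker : LinearMap.ker p = LinearMap.range i)
    (s : A →ₗ[Λ] E) (hs : p ∘ₗ s = LinearMap.id) :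
    ∃ r : E →ₗ[Λ] M, r ∘ₗ i = LinearMap.id := by
  set g : E →ₗ[Λ] E := LinearMap.id - s ∘ₗ p with hg
  have hmem : ∀ x : E, g x ∈ LinearMap.range i := by
    intro x
    rw [← hker, LinearMap.mem_ker]
    have h2 : p (s (p x)) = p x := by
      have := congrFun (congrArg (fun (F : A →ₗ[Λ] A) => (F : A → A)) hs) (p x)
      simpa using this
    simp [hg, map_sub, h2]
  let eI := LinearEquiv.ofInjective i hi
  refine ⟨eI.symm.toLinearMap ∘ₗ LinearMap.codRestrict (LinearMap.range i) g hmem, ?_⟩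
  ext m
  have hpi : p (i m) = 0 := by
    have : i m ∈ LinearMap.ker p := by rw [hker]; exact ⟨m, rfl⟩
    simpa using this
  have hgim : g (i m) = i m := by simp [hg, hpi]
  simp only [LinearMap.comp_apply, LinearEquiv.coe_coe, LinearMap.id_apply,
    LinearMap.codRestrict_apply]
  rw [LinearEquiv.symm_apply_eq]
  apply Subtype.ext
  simp [hgim, eI, LinearEquiv.ofInjective_apply]
/-- `Ext¹(T,M)=0` implies `Ext¹(Tⁿ,M)=0`. -/
lemma ext1Zero_pi {T M : Type} [AddCommGroup T] [Module Λ T]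
    [AddCommGroup M] [Module Λ M] (hext : Ext1Zero Λ T M) (n : ℕ) :
    Ext1Zero Λ (Fin n → T) M := by
  intro E _ _ i p hi hp hker
  classical
  -- for each coordinate, a section
  have hsec : ∀ a : Fin n, ∃ s : T →ₗ[Λ] E,
      (∀ t, ∀ j ≠ a, p (s t) j = 0) ∧ (∀ t, p (s t) a = t) := by
    intro a
    set Ea : Submodule Λ E := ⨅ (j : Fin n) (_ : j ≠ a),
      LinearMap.ker ((LinearMap.proj j : (Fin n → T) →ₗ[Λ] T) ∘ₗ p) with hEa
    have hmemEa : ∀ x : E, x ∈ Ea ↔ ∀ j ≠ a, p x j = 0 := by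
      intro x
      simp [hEa, Submodule.mem_iInf, LinearMap.mem_ker]
    have hiEa : ∀ m : M, i m ∈ Ea := by
      intro m
      rw [hmemEa]
      intro j _
      have : i m ∈ LinearMap.ker p := by rw [hker]; exact ⟨m, rfl⟩
      rw [LinearMap.mem_ker] at this
      simp [this]
    set ia : M →ₗ[Λ] Ea := LinearMap.codRestrict Ea i hiEa with hia
    set pa : Ea →ₗ[Λ] T := (LinearMap.proj a : (Fin n → T) →ₗ[Λ] T) ∘ₗ p ∘ₗ Ea.subtype
      with hpa
    have hia_inj : Function.Injective ia := by
      intro x y hxy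
      apply hi
      have := congrArg (Ea.subtype) hxy
      simpa [hia] using this
    have hpa_surj : Function.Surjective pa := by
      intro t
      obtain ⟨x, hx⟩ := hp ((Pi.single a t : Fin n → T))
      have hxEa : x ∈ Ea := by
        rw [hmemEa]
        intro j hj
        rw [hx]
        exact Pi.single_eq_of_ne (M := fun _ => T) hj t
      exact ⟨⟨x, hxEa⟩, by simp [hpa, hx]⟩
    have hka : LinearMap.ker pa = LinearMap.range ia := by
      ext ⟨x, hx⟩
      simp only [LinearMap.mem_ker, LinearMap.mem_range, hpa, LinearMap.comp_apply,
        Submodule.coe_subtype, LinearMap.proj_apply]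
      constructor
      · intro h0
        have hx0 : p x = 0 := by
          funext j
          by_cases hj : j = a
          · subst hj; exact h0
          · exact (hmemEa x).mp hx j hj
        have : x ∈ LinearMap.range i := by rw [← hker, LinearMap.mem_ker]; exact hx0
        obtain ⟨m, hm⟩ := this
        exact ⟨m, by apply Subtype.ext; simpa [hia] using hm⟩
      · rintro ⟨m, hm⟩
        have : x = i m := by
          have := congrArg (Ea.subtype) hm
          simpa [hia] using this.symm
        rw [this]
        have : i m ∈ LinearMap.ker p := by rw [hker]; exact ⟨m, rfl⟩
        rw [LinearMap.mem_ker] at this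
        simp [this]
    obtain ⟨r, hr⟩ := hext Ea ia pa hia_inj hpa_surj hka
    obtain ⟨s, hs⟩ := section_of_retraction ia pa hpa_surj hka r hr
    refine ⟨Ea.subtype ∘ₗ s, ?_, ?_⟩
    · intro t j hj
      exact (hmemEa _).mp (s t).2 j hj
    · intro t
      have := congrFun (congrArg (fun (F : T →ₗ[Λ] T) => (F : T → T)) hs) t
      simpa [hpa] using this
  choose s hs0 hs1 using hsec
  set S : (Fin n → T) →ₗ[Λ] E :=
    ∑ a : Fin n, (s a) ∘ₗ (LinearMap.proj a : (Fin n → T) →ₗ[Λ] (fun _ => T) a) with hS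
  have hpS : p ∘ₗ S = LinearMap.id := by
    refine LinearMap.ext fun g => ?_
    simp only [LinearMap.comp_apply, LinearMap.id_apply, hS, LinearMap.coe_sum,
      Finset.sum_apply, map_sum, LinearMap.proj_apply]
    have : ∀ a : Fin n, p (s a (g a)) = Pi.single a (g a) := by
      intro a
      funext j
      by_cases hj : j = a
      · subst hj; rw [hs1]; simp
      · rw [hs0 a (g a) j hj]; rw [Pi.single_eq_of_ne hj]
    rw [Finset.sum_congr rfl (fun a _ => this a)]
    exact Finset.univ_sum_single g
  exact retraction_of_section i p hi hker S hpS
/-- The key construction: given a surjection `π : M → X`, an injection `u : X → N`,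
hereditarity and `Ext¹(N, M) = 0`, there is `t : M → M` fixing `ker π` pointwise and
`h : N → X` with `π ∘ t = h ∘ u ∘ π`. -/
lemma key_construction {M X N : Type} [AddCommGroup M] [Module Λ M] [AddCommGroup X]
    [Module Λ X] [AddCommGroup N] [Module Λ N]
    (hH : IsHereditaryRing Λ)
    (π : M →ₗ[Λ] X) (hπ : Function.Surjective π)
    (u : X →ₗ[Λ] N) (hu : Function.Injective u)
    (hext : Ext1Zero Λ N M) :
    ∃ (t : M →ₗ[Λ] M) (h : N →ₗ[Λ] X),
      (∀ m ∈ LinearMap.ker π, t m = m) ∧ ∀ m, π (t m) = h (u (π m)) := by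
  classical
  -- free cover of N
  set F : Type := N →₀ Λ with hF
  set q : F →ₗ[Λ] N := Finsupp.linearCombination Λ _root_.id with hq
  have hqs : Function.Surjective q := by
    intro y
    refine ⟨Finsupp.single y 1, ?_⟩
    rw [hq, Finsupp.linearCombination_single]
    simp
  set F' : Submodule Λ F := Submodule.comap q (LinearMap.range u) with hF'
  haveI hP : Module.Projective Λ F' := hH F inferInstance F'
  set uE : X ≃ₗ[Λ] LinearMap.range u := LinearEquiv.ofInjective u hu with huE
  have huEs : ∀ y : LinearMap.range u, u (uE.symm y) = (y : N) := by
    intro y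
    have h1 : uE (uE.symm y) = y := uE.apply_symm_apply y
    calc u (uE.symm y) = (uE (uE.symm y) : N) := rfl
      _ = (y : N) := by rw [h1]
  set q' : F' →ₗ[Λ] X := uE.symm.toLinearMap ∘ₗ
    LinearMap.codRestrict (LinearMap.range u) (q ∘ₗ F'.subtype) (fun x => x.2) with hq'
  have huq' : ∀ x : F', u (q' x) = q (x : F) := by
    intro x
    simp only [hq', LinearMap.comp_apply, LinearEquiv.coe_coe]
    rw [huEs]
    rfl
  -- lift q' along π
  obtain ⟨φ₀, hφ₀⟩ := Module.projective_lifting_property π q' hπ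
  have hφ₀' : ∀ x : F', π (φ₀ x) = q' x := fun x =>
    congrFun (congrArg (fun (G : F' →ₗ[Λ] X) => (G : F' → X)) hφ₀) x
  -- E := pushout (F ⊕ M)/W
  set W : Submodule Λ (F × M) := LinearMap.range (LinearMap.prod F'.subtype (-φ₀)) with hW
  set e : M →ₗ[Λ] (F × M) ⧸ W := W.mkQ ∘ₗ LinearMap.inr Λ F M with he
  set ρ₀ : F × M →ₗ[Λ] N := q ∘ₗ LinearMap.fst Λ F M + (u ∘ₗ π) ∘ₗ LinearMap.snd Λ F M
    with hρ₀
  have hρ₀ap : ∀ z : F × M, ρ₀ z = q z.1 + u (π z.2) := by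
    intro z
    simp [hρ₀]
  have hWρ : W ≤ LinearMap.ker ρ₀ := by
    rintro _ ⟨x, rfl⟩
    rw [LinearMap.mem_ker, hρ₀ap]
    simp only [LinearMap.prod_apply, Function.prod, LinearMap.neg_apply, map_neg]
    rw [hφ₀' x, huq' x]
    simp [Submodule.coe_subtype]
  set ρ : (F × M) ⧸ W →ₗ[Λ] N := W.liftQ ρ₀ hWρ with hρ
  have hρmk : ∀ z : F × M, ρ (W.mkQ z) = ρ₀ z := fun z => rfl
  have hρe : ∀ m : M, ρ (e m) = u (π m) := by
    intro m
    simp only [he, LinearMap.comp_apply]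
    rw [hρmk, hρ₀ap]
    simp
  have hρs : Function.Surjective ρ := by
    intro y
    obtain ⟨z, hz⟩ := hqs y
    refine ⟨W.mkQ (z, 0), ?_⟩
    rw [hρmk, hρ₀ap]
    simp [hz]
  have he_inj : Function.Injective e := by
    rw [← LinearMap.ker_eq_bot]
    ext m
    simp only [LinearMap.mem_ker, Submodule.mem_bot]
    constructor
    · intro hm
      have hmem : ((0, m) : F × M) ∈ W := by
        rw [← Submodule.Quotient.mk_eq_zero W]
        exact hm
      obtain ⟨x, hx⟩ := hmem
      have hx1 : (x : F) = 0 := congrArg Prod.fst hx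
      have hx0 : x = 0 := Subtype.ext hx1
      have hx2 : -φ₀ x = m := congrArg Prod.snd hx
      rw [hx0] at hx2
      simpa using hx2.symm
    · rintro rfl; simp
  have hkerρ : ∀ x : (F × M) ⧸ W, ρ x = 0 → ∃ k ∈ LinearMap.ker π, x = e k := by
    intro x hx
    obtain ⟨⟨z, m⟩, rfl⟩ := Submodule.Quotient.mk_surjective W x
    rw [← Submodule.mkQ_apply, hρmk, hρ₀ap] at hx
    have hz : z ∈ F' := by
      rw [hF', Submodule.mem_comap]
      have : q z = -(u (π m)) := eq_neg_of_add_eq_zero_left hx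
      rw [this]
      exact neg_mem ⟨π m, rfl⟩
    refine ⟨m + φ₀ ⟨z, hz⟩, ?_, ?_⟩
    · rw [LinearMap.mem_ker]
      apply hu
      rw [map_zero, map_add, hφ₀' ⟨z, hz⟩, map_add, huq' ⟨z, hz⟩]
      rw [add_comm] at hx
      simpa using hx
    · rw [he]
      simp only [LinearMap.comp_apply, Submodule.mkQ_apply, LinearMap.inr_apply]
      rw [Submodule.Quotient.eq]
      refine ⟨⟨z, hz⟩, ?_⟩
      simp only [LinearMap.prod_apply, Function.prod, LinearMap.neg_apply, Submodule.coe_subtype]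
      rw [Prod.mk_sub_mk, Prod.mk.injEq]
      constructor <;> abel
  -- Ē := pushout (M ⊕ E)/V
  set K : Submodule Λ M := LinearMap.ker π with hK
  set V : Submodule Λ (M × ((F × M) ⧸ W)) :=
    LinearMap.range (LinearMap.prod K.subtype (-(e ∘ₗ K.subtype))) with hV
  set mb : M →ₗ[Λ] (M × ((F × M) ⧸ W)) ⧸ V :=
    V.mkQ ∘ₗ LinearMap.inl Λ M ((F × M) ⧸ W) with hmb
  set eb : ((F × M) ⧸ W) →ₗ[Λ] (M × ((F × M) ⧸ W)) ⧸ V :=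
    V.mkQ ∘ₗ LinearMap.inr Λ M ((F × M) ⧸ W) with heb
  have hVρ : V ≤ LinearMap.ker (ρ ∘ₗ LinearMap.snd Λ M ((F × M) ⧸ W)) := by
    rintro _ ⟨k, rfl⟩
    simp only [LinearMap.mem_ker, LinearMap.prod_apply, Function.prod, LinearMap.comp_apply,
      LinearMap.snd_apply, LinearMap.neg_apply, map_neg]
    rw [hρe]
    have : π (K.subtype k) = 0 := k.2
    rw [this]
    simp
  set ρb : ((M × ((F × M) ⧸ W)) ⧸ V) →ₗ[Λ] N :=
    V.liftQ (ρ ∘ₗ LinearMap.snd Λ M ((F × M) ⧸ W)) hVρ with hρb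
  have hρbmk : ∀ z : M × ((F × M) ⧸ W), ρb (V.mkQ z) = ρ z.2 := fun z => rfl
  have hmb_inj : Function.Injective mb := by
    rw [← LinearMap.ker_eq_bot]
    ext m
    simp only [LinearMap.mem_ker, Submodule.mem_bot]
    constructor
    · intro hm
      have hmem : ((m, 0) : M × ((F × M) ⧸ W)) ∈ V := by
        rw [← Submodule.Quotient.mk_eq_zero V]
        exact hm
      obtain ⟨k, hk⟩ := hmem
      have hk2 : -(e (K.subtype k)) = 0 := congrArg Prod.snd hk
      have hk3 : (k : M) = 0 := by
        apply he_inj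
        rw [map_zero]
        simpa [Submodule.coe_subtype] using hk2
      have hk1 : (k : M) = m := congrArg Prod.fst hk
      rw [← hk1, hk3]
    · rintro rfl; simp
  have hρb_surj : Function.Surjective ρb := by
    intro y
    obtain ⟨x, hx⟩ := hρs y
    exact ⟨V.mkQ (0, x), by rw [hρbmk]; exact hx⟩
  have hkerρb : LinearMap.ker ρb = LinearMap.range mb := by
    ext x
    simp only [LinearMap.mem_ker, LinearMap.mem_range]
    constructor
    · intro hx
      obtain ⟨⟨m, y⟩, rfl⟩ := Submodule.Quotient.mk_surjective V x
      rw [← Submodule.mkQ_apply, hρbmk] at hx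
      obtain ⟨k, hk, hy⟩ := hkerρ y hx
      refine ⟨m + k, ?_⟩
      rw [hmb]
      simp only [LinearMap.comp_apply, Submodule.mkQ_apply, LinearMap.inl_apply]
      rw [Submodule.Quotient.eq]
      refine ⟨⟨k, hk⟩, ?_⟩
      simp only [LinearMap.prod_apply, Function.prod, LinearMap.neg_apply, LinearMap.comp_apply,
        Submodule.coe_subtype]
      rw [hy, Prod.mk_sub_mk, Prod.mk.injEq]
      constructor <;> abel
    · rintro ⟨m, rfl⟩
      rw [hmb, LinearMap.comp_apply, Submodule.mkQ_apply]
      have : ρb (V.mkQ (LinearMap.inl Λ M ((F × M) ⧸ W) m)) = ρ 0 := hρbmk _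
      rw [← Submodule.mkQ_apply, this, map_zero]
  obtain ⟨r, hr⟩ := hext ((M × ((F × M) ⧸ W)) ⧸ V) mb ρb hmb_inj hρb_surj hkerρb
  have hr' : ∀ m : M, r (mb m) = m := fun m =>
    congrFun (congrArg (fun (G : M →ₗ[Λ] M) => (G : M → M)) hr) m
  set t : M →ₗ[Λ] M := r ∘ₗ eb ∘ₗ e with ht
  have hebe : ∀ k ∈ K, eb (e k) = mb k := by
    intro k hk
    rw [heb, hmb]
    simp only [LinearMap.comp_apply, Submodule.mkQ_apply, LinearMap.inl_apply,
      LinearMap.inr_apply]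
    rw [Submodule.Quotient.eq]
    refine ⟨-⟨k, hk⟩, ?_⟩
    simp only [map_neg, LinearMap.prod_apply, Function.prod, LinearMap.neg_apply,
      LinearMap.comp_apply, Submodule.coe_subtype, Prod.neg_mk, neg_neg]
    rw [Prod.mk_sub_mk, Prod.mk.injEq]
    constructor <;> abel
  have htfix : ∀ m ∈ LinearMap.ker π, t m = m := by
    intro k hk
    rw [ht]
    simp only [LinearMap.comp_apply]
    rw [hebe k hk, hr' k]
  -- factor π ∘ r ∘ eb through ρ
  have hle : LinearMap.ker ρ ≤ LinearMap.ker (π ∘ₗ r ∘ₗ eb) := by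
    intro x hx
    rw [LinearMap.mem_ker] at hx ⊢
    obtain ⟨k, hk, rfl⟩ := hkerρ x hx
    simp only [LinearMap.comp_apply]
    rw [hebe k hk, hr' k]
    exact hk
  obtain ⟨h, hh⟩ := factor_through_surj ρ hρs (π ∘ₗ r ∘ₗ eb) hle
  refine ⟨t, h, htfix, ?_⟩
  intro m
  have := congrFun (congrArg (fun (G : ((F × M) ⧸ W) →ₗ[Λ] X) => (G : ((F × M) ⧸ W) → X)) hh)
    (e m)
  simp only [LinearMap.comp_apply] at this
  rw [hρe] at this
  rw [ht]
  simp only [LinearMap.comp_apply]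
  rw [this]
/-- Over a hereditary artin algebra, if `M` is indecomposable with
`Ext¹(T, M) = 0`, then the minimal left `add T`-approximation `λ_M : M → T'`
is either a monomorphism or an epimorphism. -/
theorem min_left_approx_mono_or_epi (Λ : Type) [Ring Λ] [IsArtinianRing Λ]
    (hH : IsHereditaryRing Λ)
    (T M T' : Type) [AddCommGroup T] [Module Λ T] [AddCommGroup M] [Module Λ M]
    [AddCommGroup T'] [Module Λ T']
    (hTfl : IsFiniteLength Λ T) (hMfl : IsFiniteLength Λ M)
    (hM : IsIndec Λ M) (hext : Ext1Zero Λ T M) (hT' : InAdd Λ T T')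
    (f : M →ₗ[Λ] T')
    (happrox : ∀ g : M →ₗ[Λ] T, ∃ h : T' →ₗ[Λ] T, h ∘ₗ f = g)
    (hmin : ∀ θ : T' →ₗ[Λ] T', θ ∘ₗ f = f → Function.Bijective θ) :
    Function.Injective f ∨ Function.Surjective f := by
  by_contra hcon
  push_neg at hcon
  obtain ⟨hni, hns⟩ := hcon
  obtain ⟨n, j, pj, hpj⟩ := hT'
  obtain ⟨hMn, hMa⟩ := isFiniteLength_iff_isNoetherian_isArtinian.mp hMfl
  set I : Submodule Λ T' := LinearMap.range f with hI
  set π : M →ₗ[Λ] I := f.rangeRestrict with hπdef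
  have hπs : Function.Surjective π := f.surjective_rangeRestrict
  set ι : I →ₗ[Λ] T' := I.subtype with hιdef
  have hj_inj : Function.Injective j := by
    intro a b hab
    have h1 := congrFun (congrArg (fun (G : T' →ₗ[Λ] T') => (G : T' → T')) hpj)
    simp only [LinearMap.comp_apply, LinearMap.id_apply] at h1
    rw [← h1 a, ← h1 b, hab]
  set u : I →ₗ[Λ] (Fin n → T) := j ∘ₗ ι with hu
  have hu_inj : Function.Injective u := by
    have hcoe : ⇑u = ⇑j ∘ ⇑ι := rfl
    rw [hcoe]
    exact hj_inj.comp (Submodule.injective_subtype I)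
  obtain ⟨t, h, htfix, hcomm⟩ := key_construction hH π hπs u hu_inj (ext1Zero_pi hext n)
  have hkerπ : LinearMap.ker π = LinearMap.ker f := f.ker_rangeRestrict
  -- a nonzero kernel element
  obtain ⟨a, b, hab, hne⟩ := Function.not_injective_iff.mp hni
  set k0 := a - b with hk0def
  have hk0 : k0 ∈ LinearMap.ker π := by
    rw [hkerπ, LinearMap.mem_ker, map_sub, hab, sub_self]
  have hk0ne : k0 ≠ 0 := sub_ne_zero.mpr hne
  -- Fitting decomposition
  obtain ⟨p, hp1, hcompl⟩ : ∃ p : ℕ, 1 ≤ p ∧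
      IsCompl (LinearMap.ker (t ^ p)) (LinearMap.range (t ^ p)) := by
    have hev := t.eventually_isCompl_ker_pow_range_pow
    rw [Filter.eventually_atTop] at hev
    obtain ⟨p0, hp0⟩ := hev
    exact ⟨max p0 1, le_max_right _ _, hp0 _ (le_max_left _ _)⟩
  have htpk : ∀ p : ℕ, (t ^ p) k0 = k0 := by
    intro p
    induction p with
    | zero => simp
    | succ p ih => rw [pow_succ', Module.End.mul_apply, ih, htfix k0 hk0]
  rcases hM.2 _ _ hcompl with hker | hrange
  · -- t is injective, hence bijective
    have ht_inj : Function.Injective t := by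
      rw [← LinearMap.ker_eq_bot, eq_bot_iff]
      refine le_trans ?_ (le_of_eq hker)
      intro x hx
      rw [LinearMap.mem_ker] at hx ⊢
      obtain ⟨p', rfl⟩ := Nat.exists_eq_add_of_le hp1
      rw [add_comm, pow_succ, Module.End.mul_apply, hx, map_zero]
    have ht_surj : Function.Surjective t :=
      IsArtinian.surjective_of_injective_endomorphism t ht_inj
    set φ : I →ₗ[Λ] I := h ∘ₗ u with hφ
    have hφsurj : Function.Surjective φ := by
      intro y
      obtain ⟨m, rfl⟩ := hπs y
      obtain ⟨m', rfl⟩ := ht_surj m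
      exact ⟨π m', (hcomm m').symm⟩
    haveI : IsNoetherian Λ I :=
      isNoetherian_of_surjective π (LinearMap.range_eq_top.mpr hπs)
    have hφinj : Function.Injective φ :=
      IsNoetherian.injective_of_surjective_endomorphism φ hφsurj
    set φE : I ≃ₗ[Λ] I := LinearEquiv.ofBijective φ ⟨hφinj, hφsurj⟩ with hφE
    set θ : T' →ₗ[Λ] T' := ι ∘ₗ (φE.symm : I →ₗ[Λ] I) ∘ₗ h ∘ₗ j with hθ
    have hθf : θ ∘ₗ f = f := by
      refine LinearMap.ext fun m => ?_
      show ι (φE.symm (h (j (f m)))) = f m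
      have h1 : h (j (f m)) = φE (π m) := rfl
      rw [h1, φE.symm_apply_apply]
      rfl
    have hθbij := hmin θ hθf
    apply hns
    intro y
    obtain ⟨x, hx⟩ := hθbij.2 y
    have hyI : y ∈ I := by
      rw [← hx]
      exact (φE.symm (h (j x))).2
    exact hyI
  · -- range (t^p) = ⊥ contradicts t fixing k0 ≠ 0
    exfalso
    apply hk0ne
    rw [← htpk p]
    have : (t ^ p) k0 ∈ LinearMap.range (t ^ p) := ⟨k0, rfl⟩
    rw [hrange] at this
    simpa using this
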